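/- arXiv:1602.08315 — 3 statements merged into one kernel-verified Lean document; each statement's English description precedes it below -/
import Mathlib

section
/- Let m ∈ (0,1) and h ∈ (0, 1/4). Define A(w) := (w^{m−1} − 1)/((m−1)(w−1)) for w > 0, w ≠ 1, and A(1) := 1. Then for all w ∈ [1−h, 1+h] with w > 0 one has (1+h)^{m−2} ≤ A(w) ≤ (1−h)^{m−2}. -/
open Real

theorem A_bounds (m h : ℝ) (hm0 : 0 < m) (hm1 : m < 1) (hh0 : 0 < h) (hh : h < 1/4) :
    ∀ w : ℝ, 1 - h ≤ w → w ≤ 1 + h → 0 < w →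
      (1 + h) ^ (m - 2) ≤ (if w = 1 then 1 else (w ^ (m - 1) - 1) / ((m - 1) * (w - 1))) ∧
      (if w = 1 then 1 else (w ^ (m - 1) - 1) / ((m - 1) * (w - 1))) ≤ (1 - h) ^ (m - 2) := by
  intro w hw1 hw2 hw0
  have hm2 : m - 2 ≤ 0 := by linarith
  have h1h : 0 < 1 - h := by linarith
  have hmono : ∀ x y : ℝ, 0 < x → x ≤ y → y ^ (m - 2) ≤ x ^ (m - 2) :=
    fun x y hx hxy => Real.rpow_le_rpow_of_nonpos hx hxy hm2
  by_cases hw : w = 1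
  · simp only [hw, if_pos rfl]
    constructor
    · exact Real.rpow_le_one_of_one_le_of_nonpos (by linarith) hm2
    · exact Real.one_le_rpow_of_pos_of_le_one_of_nonpos h1h (by linarith) hm2
  · simp only [if_neg hw]
    -- MVT to find c strictly between w and 1 with (m-1)*c^(m-2) = slope
    have key : ∃ c : ℝ, 1 - h < c ∧ c < 1 + h ∧ 0 < c ∧
        (w ^ (m - 1) - 1) / ((m - 1) * (w - 1)) = c ^ (m - 2) := by
      have hm1' : m - 1 ≠ 0 := by intro hc; apply hw; linarith [sub_eq_zero.mp hc]
      have hm1'' : m - 1 ≠ 0 := sub_ne_zero.mpr (by linarith)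
      have hcont : ∀ a b : ℝ, 0 < a → ContinuousOn (fun t : ℝ => t ^ (m - 1)) (Set.Icc a b) := by
        intro a b ha
        apply ContinuousOn.rpow_const continuousOn_id
        intro t ht
        exact Or.inl (ne_of_gt (lt_of_lt_of_le ha ht.1))
      rcases lt_or_gt_of_ne hw with hlt | hgt
      · obtain ⟨c, hc, heq⟩ := exists_hasDerivAt_eq_slope (fun t => t ^ (m - 1))
          (fun t => (m - 1) * t ^ (m - 2)) hlt (hcont w 1 hw0)
          (fun x hx => by
            have hx0 : x ≠ 0 := ne_of_gt (lt_trans hw0 hx.1)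
            have := Real.hasDerivAt_rpow_const (p := m - 1) (Or.inl hx0)
            convert this using 1
            ring_nf)
        have hc0 : 0 < c := lt_trans hw0 hc.1
        refine ⟨c, by linarith [hc.1], by linarith [hc.2], hc0, ?_⟩
        rw [Real.one_rpow] at heq
        have hw1' : w - 1 ≠ 0 := sub_ne_zero.mpr hw
        have h1w : (1:ℝ) - w ≠ 0 := by intro hc; apply hw1'; linarith [sub_eq_zero.mp hc]
        rw [eq_div_iff h1w] at heq
        rw [div_eq_iff (mul_ne_zero hm1' hw1')]
        linear_combination heq
      · obtain ⟨c, hc, heq⟩ := exists_hasDerivAt_eq_slope (fun t => t ^ (m - 1))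
          (fun t => (m - 1) * t ^ (m - 2)) hgt (hcont 1 w one_pos)
          (fun x hx => by
            have hx0 : x ≠ 0 := ne_of_gt (lt_trans one_pos hx.1)
            have := Real.hasDerivAt_rpow_const (p := m - 1) (Or.inl hx0)
            convert this using 1
            ring_nf)
        have hc0 : 0 < c := lt_trans one_pos hc.1
        refine ⟨c, by linarith [hc.1], by linarith [hc.2], hc0, ?_⟩
        rw [Real.one_rpow] at heq
        have hw1' : w - 1 ≠ 0 := sub_ne_zero.mpr hw
        rw [eq_div_iff hw1'] at heq
        rw [div_eq_iff (mul_ne_zero hm1' hw1')]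
        linear_combination -heq
    obtain ⟨c, hc1, hc2, hc0, heq⟩ := key
    rw [heq]
    exact ⟨hmono c (1 + h) hc0 hc2.le, hmono (1 - h) c h1h hc1.le⟩
end

section
/- Let d ≥ 2, m ∈ (0,1), β, γ with γ < d and γ − 2 < β < (d−2)γ/d, and C₁ > C₂ > 0. Define 𝔅ᵢ(x) = (Cᵢ + |x|^{2+β−γ})^{1/(m−1)} for i = 1,2. Then ∫_{ℝ^d} (𝔅₂(x) − 𝔅₁(x)) |x|^{−γ} dx < ∞ if and only if m > m_* := (d−4−2β+γ)/(d−2−β). -/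
open MeasureTheory
open Set Metric Module ENNReal

lemma my_lintegral_fun_norm_polar {E : Type*} [NormedAddCommGroup E] [NormedSpace ℝ E]
    [MeasurableSpace E] [BorelSpace E] [FiniteDimensional ℝ E] [Nontrivial E]
    (μ : Measure E) [μ.IsAddHaarMeasure] (g : ℝ → ℝ≥0∞) (hg : Measurable g) :
    ∫⁻ x, g ‖x‖ ∂μ = μ.toSphere univ *
      ∫⁻ r in Ioi (0:ℝ), ENNReal.ofReal (r ^ (finrank ℝ E - 1)) * g r := by
  calc ∫⁻ x, g ‖x‖ ∂μ
      = ∫⁻ x : ({0}ᶜ : Set E), g ‖x.1‖ ∂(μ.comap (↑)) := by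
        rw [lintegral_subtype_comap (measurableSet_singleton (0:E)).compl (fun x => g ‖x‖),
          MeasureTheory.restrict_compl_singleton]
    _ = ∫⁻ y : sphere (0:E) 1 × Ioi (0:ℝ), g y.2
          ∂(μ.toSphere.prod (.volumeIoiPow (finrank ℝ E - 1))) := by
        rw [← μ.measurePreserving_homeomorphUnitSphereProd.lintegral_comp_emb
          (Homeomorph.measurableEmbedding _) (fun y => g y.2)]
        exact lintegral_congr fun x => by simp
    _ = μ.toSphere univ * ∫⁻ r : Ioi (0:ℝ), g r
          ∂(Measure.volumeIoiPow (finrank ℝ E - 1)) := by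
        rw [lintegral_prod (fun y : sphere (0:E) 1 × Ioi (0:ℝ) => g ↑y.2)
          (hg.comp (measurable_subtype_coe.comp measurable_snd)).aemeasurable]
        simp [lintegral_const, mul_comm]
    _ = _ := by
        congr 1
        have h1 : (∫⁻ (r : ↑(Ioi (0:ℝ))), g ↑r
              ∂(Measure.comap Subtype.val volume).withDensity
                (fun r => ENNReal.ofReal (↑r ^ (finrank ℝ E - 1)))) =
            ∫⁻ (r : ↑(Ioi (0:ℝ))), ENNReal.ofReal (↑r ^ (finrank ℝ E - 1)) * g ↑r
              ∂(Measure.comap Subtype.val volume) :=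
          lintegral_withDensity_eq_lintegral_mul _
            ((measurable_subtype_coe.pow_const _).ennreal_ofReal)
            (hg.comp measurable_subtype_coe)
        rw [Measure.volumeIoiPow, h1,
          ← lintegral_subtype_comap measurableSet_Ioi
            (fun r : ℝ => ENNReal.ofReal (r ^ (finrank ℝ E - 1)) * g r)]

lemma my_lintegral_norm_lt_top_iff {d : ℕ} (hd : 0 < d) (g : ℝ → ℝ≥0∞) (hg : Measurable g) :
    (∫⁻ x : EuclideanSpace ℝ (Fin d), g ‖x‖ < ⊤) ↔
      (∫⁻ r in Ioi (0:ℝ), ENNReal.ofReal (r ^ (d - 1)) * g r < ⊤) := by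
  haveI : Nontrivial (EuclideanSpace ℝ (Fin d)) :=
    Module.nontrivial_of_finrank_pos (R := ℝ)
      (by rw [finrank_euclideanSpace_fin]; exact hd)
  rw [my_lintegral_fun_norm_polar volume g hg, finrank_euclideanSpace_fin]
  have hκ1 : (volume : Measure (EuclideanSpace ℝ (Fin d))).toSphere univ ≠ 0 := by
    rw [Measure.toSphere_apply_univ]
    refine mul_ne_zero ?_ (measure_ball_pos volume (0:EuclideanSpace ℝ (Fin d)) one_pos).ne'
    simp [finrank_euclideanSpace_fin, hd.ne']
  have hκ2 : (volume : Measure (EuclideanSpace ℝ (Fin d))).toSphere univ ≠ ⊤ :=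
    measure_ne_top _ _
  rw [ENNReal.mul_lt_top_iff]
  constructor
  · rintro (⟨-, h⟩ | h | h)
    · exact h
    · exact absurd h hκ1
    · simp [h]
  · intro h
    exact Or.inl ⟨hκ2.lt_top, h⟩

lemma my_diff_rpow_bounds {p C₁ C₂ : ℝ} (hp : p < 0) (hC2 : 0 < C₂) (hC : C₂ < C₁)
    {t : ℝ} (ht : 0 ≤ t) :
    (-p) * (C₁ - C₂) * (C₁ + t) ^ (p - 1) ≤ (C₂ + t) ^ p - (C₁ + t) ^ p ∧
      (C₂ + t) ^ p - (C₁ + t) ^ p ≤ (-p) * (C₁ - C₂) * (C₂ + t) ^ (p - 1) := by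
  have h2 : 0 < C₂ + t := by linarith
  have h1 : 0 < C₁ + t := by linarith
  obtain ⟨c, hc, hslope⟩ := exists_hasDerivAt_eq_slope (fun s => (s + t) ^ p)
    (fun s => p * (s + t) ^ (p - 1)) hC
    (by
      apply ContinuousOn.rpow_const (continuousOn_id.add continuousOn_const)
      intro s hs
      have hs0 : (0:ℝ) < s + t := by have := hs.1; linarith
      exact Or.inl hs0.ne')
    (fun s hs => by
      have hs0 : 0 < s + t := by have := hs.1; linarith
      have hd := (Real.hasDerivAt_rpow_const (x := s + t) (p := p) (Or.inl hs0.ne')).comp s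
        ((hasDerivAt_id s).add_const t)
      simpa [Function.comp_def] using hd)
  have hcpos : 0 < c + t := by have := hc.1; linarith
  have hCC : 0 < C₁ - C₂ := by linarith
  have key : (C₂ + t) ^ p - (C₁ + t) ^ p = (-p) * (C₁ - C₂) * (c + t) ^ (p - 1) := by
    have := hslope
    field_simp at this
    nlinarith [this]
  have hK : 0 ≤ (-p) * (C₁ - C₂) := by nlinarith
  constructor
  · rw [key]
    exact mul_le_mul_of_nonneg_left
      (Real.rpow_le_rpow_of_nonpos hcpos (by linarith [hc.2]) (by linarith)) hK
  · rw [key]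
    exact mul_le_mul_of_nonneg_left
      (Real.rpow_le_rpow_of_nonpos h2 (by linarith [hc.1]) (by linarith)) hK

set_option maxHeartbeats 1000000 in
theorem barenblatt_difference_integrable_iff (d : ℕ) (β γ m C₁ C₂ : ℝ) (hd : 2 ≤ d)
    (hγ : γ < d) (hβ1 : γ - 2 < β) (hβ2 : β < (d - 2) * γ / d)
    (hm0 : 0 < m) (hm1 : m < 1) (hC2 : 0 < C₂) (hC : C₂ < C₁) :
    Integrable (fun x : EuclideanSpace ℝ (Fin d) =>
        ((C₂ + ‖x‖ ^ (2 + β - γ)) ^ (1 / (m - 1))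
          - (C₁ + ‖x‖ ^ (2 + β - γ)) ^ (1 / (m - 1))) * ‖x‖ ^ (-γ)) volume ↔
    (d - 4 - 2 * β + γ) / (d - 2 - β) < m := by
  have hd0 : 0 < d := by omega
  haveI : Nontrivial (EuclideanSpace ℝ (Fin d)) :=
    Module.nontrivial_of_finrank_pos (R := ℝ)
      (by rw [finrank_euclideanSpace_fin]; exact hd0)
  have hdR : (2:ℝ) ≤ d := by exact_mod_cast hd
  have hdpos : (0:ℝ) < d := by linarith
  -- abbreviations
  set α : ℝ := 2 + β - γ with hαdef
  set p : ℝ := 1 / (m - 1) with hpdef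
  have hm1' : m - 1 < 0 := by linarith
  have hp : p < 0 := div_neg_of_pos_of_neg one_pos hm1'
  have hα : 0 < α := by rw [hαdef]; linarith
  have hD : 0 < (d:ℝ) - 2 - β := by
    have h1 : (d - 2) * γ / d ≤ (d:ℝ) - 2 := by
      rw [div_le_iff₀ hdpos]; nlinarith
    linarith
  set θ : ℝ := (d:ℝ) - 1 - γ + α * (p - 1) with hθdef
  have hiff : θ < -1 ↔ (d - 4 - 2 * β + γ) / (d - 2 - β) < m := by
    rw [div_lt_iff₀ hD]
    have key : (θ + 1) * (1 - m) = ((d:ℝ) - 4 - 2 * β + γ) - m * ((d:ℝ) - 2 - β) := by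
      have hne : m - 1 ≠ 0 := hm1'.ne
      rw [hθdef, hpdef, hαdef]
      field_simp
      ring
    constructor
    · intro h; nlinarith
    · intro h; nlinarith
  -- the radial profile
  set g : ℝ → ℝ := fun r =>
    ((C₂ + r ^ (2 + β - γ)) ^ (1 / (m - 1)) - (C₁ + r ^ (2 + β - γ)) ^ (1 / (m - 1)))
      * r ^ (-γ) with hgdef
  have hgm : Measurable g := by
    rw [hgdef]; fun_prop
  have hg_eq : ∀ r : ℝ, g r = ((C₂ + r ^ α) ^ p - (C₁ + r ^ α) ^ p) * r ^ (-γ) := fun r => rfl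
  have hg_nonneg : ∀ r : ℝ, 0 < r → 0 ≤ g r := by
    intro r hr
    rw [hg_eq]
    have ht : 0 < r ^ α := Real.rpow_pos_of_pos hr α
    have : (C₁ + r ^ α) ^ p ≤ (C₂ + r ^ α) ^ p :=
      Real.rpow_le_rpow_of_nonpos (by linarith) (by linarith) hp.le
    have := Real.rpow_nonneg hr.le (-γ)
    nlinarith
  -- constants for the bounds
  set K : ℝ := (-p) * (C₁ - C₂) with hKdef
  have hKpos : 0 < K := by rw [hKdef]; nlinarith
  -- 1-dim function
  set h : ℝ → ℝ := fun r => r ^ (d - 1) * g r with hhdef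
  have hhm : Measurable h := (measurable_id.pow_const (d-1)).mul hgm
  have hpow_cast : ((d - 1 : ℕ) : ℝ) = (d:ℝ) - 1 := by
    rw [Nat.cast_sub hd0]; simp
  have hpow_eq : ∀ r : ℝ, 0 < r → (r ^ (d - 1 : ℕ) : ℝ) = r ^ ((d:ℝ) - 1) := by
    intro r hr
    rw [← Real.rpow_natCast r (d-1), hpow_cast]
  have hh_eq : ∀ r : ℝ, 0 < r → h r = r ^ ((d:ℝ) - 1) * g r := by
    intro r hr
    show r ^ (d - 1 : ℕ) * g r = _
    rw [hpow_eq r hr]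
  have hh_nonneg : ∀ r : ℝ, 0 < r → 0 ≤ h r := by
    intro r hr
    show 0 ≤ r ^ (d - 1 : ℕ) * g r
    exact mul_nonneg (pow_nonneg hr.le _) (hg_nonneg r hr)
  -- upper bound valid for all r > 0
  have hub : ∀ r : ℝ, 0 < r → h r ≤ K * r ^ θ := by
    intro r hr
    have ht : 0 < r ^ α := Real.rpow_pos_of_pos hr α
    have hb := (my_diff_rpow_bounds hp hC2 hC ht.le).2
    have h1 : (C₂ + r ^ α) ^ (p - 1) ≤ (r ^ α) ^ (p - 1) :=
      Real.rpow_le_rpow_of_nonpos ht (by linarith) (by linarith)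
    have h2 : (r ^ α) ^ (p - 1) = r ^ (α * (p - 1)) := by
      rw [← Real.rpow_mul hr.le]
    have hg_ub : g r ≤ K * r ^ (α * (p - 1)) * r ^ (-γ) := by
      rw [hg_eq]
      have hrn : 0 ≤ r ^ (-γ) := Real.rpow_nonneg hr.le _
      have : (C₂ + r ^ α) ^ p - (C₁ + r ^ α) ^ p ≤ K * r ^ (α * (p - 1)) := by
        calc (C₂ + r ^ α) ^ p - (C₁ + r ^ α) ^ p ≤ K * (C₂ + r ^ α) ^ (p - 1) := hb
          _ ≤ K * r ^ (α * (p - 1)) := by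
              rw [← h2]; exact mul_le_mul_of_nonneg_left h1 hKpos.le
      exact mul_le_mul_of_nonneg_right this hrn
    calc h r = r ^ ((d:ℝ) - 1) * g r := hh_eq r hr
      _ ≤ r ^ ((d:ℝ) - 1) * (K * r ^ (α * (p - 1)) * r ^ (-γ)) := by
          exact mul_le_mul_of_nonneg_left hg_ub (Real.rpow_nonneg hr.le _)
      _ = K * r ^ θ := by
          have he : ((d:ℝ) - 1) + (α * (p - 1) + -γ) = θ := by rw [hθdef]; ring
          rw [← he, Real.rpow_add hr, Real.rpow_add hr]
          ring
  -- lower bound for large r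
  set R₀ : ℝ := max 1 (C₁ ^ (1/α)) with hR₀def
  have hR₀pos : 0 < R₀ := lt_of_lt_of_le one_pos (le_max_left _ _)
  set c₀ : ℝ := K * 2 ^ (p - 1) with hc₀def
  have hc₀pos : 0 < c₀ := mul_pos hKpos (Real.rpow_pos_of_pos two_pos _)
  have hlb : ∀ r : ℝ, R₀ < r → c₀ * r ^ θ ≤ h r := by
    intro r hr
    have hr0 : 0 < r := lt_trans hR₀pos hr
    have ht : 0 < r ^ α := Real.rpow_pos_of_pos hr0 α
    have hC₁t : C₁ ≤ r ^ α := by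
      have h1 : C₁ ^ (1/α) ≤ r := le_trans (le_max_right _ _) hr.le
      have h2 : (C₁ ^ (1/α)) ^ α ≤ r ^ α :=
        Real.rpow_le_rpow (Real.rpow_nonneg (by linarith) _) h1 hα.le
      rwa [← Real.rpow_mul (by linarith : (0:ℝ) ≤ C₁), one_div,
        inv_mul_cancel₀ hα.ne', Real.rpow_one] at h2
    have hb := (my_diff_rpow_bounds hp hC2 hC ht.le).1
    have h1 : (2 * (r ^ α)) ^ (p - 1) ≤ (C₁ + r ^ α) ^ (p - 1) :=
      Real.rpow_le_rpow_of_nonpos (by linarith) (by linarith) (by linarith)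
    have h2 : (2 * (r ^ α)) ^ (p - 1) = 2 ^ (p - 1) * r ^ (α * (p - 1)) := by
      rw [Real.mul_rpow (by norm_num) ht.le, ← Real.rpow_mul hr0.le]
    have hg_lb : c₀ * r ^ (α * (p - 1)) * r ^ (-γ) ≤ g r := by
      rw [hg_eq]
      have hrn : 0 ≤ r ^ (-γ) := Real.rpow_nonneg hr0.le _
      have : c₀ * r ^ (α * (p - 1)) ≤ (C₂ + r ^ α) ^ p - (C₁ + r ^ α) ^ p := by
        calc c₀ * r ^ (α * (p - 1)) = K * (2 ^ (p - 1) * r ^ (α * (p - 1))) := by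
              rw [hc₀def]; ring
          _ = K * (2 * (r ^ α)) ^ (p - 1) := by rw [h2]
          _ ≤ K * (C₁ + r ^ α) ^ (p - 1) := mul_le_mul_of_nonneg_left h1 hKpos.le
          _ ≤ (C₂ + r ^ α) ^ p - (C₁ + r ^ α) ^ p := hb
      exact mul_le_mul_of_nonneg_right this hrn
    calc c₀ * r ^ θ = r ^ ((d:ℝ) - 1) * (c₀ * r ^ (α * (p - 1)) * r ^ (-γ)) := by
          have he : ((d:ℝ) - 1) + (α * (p - 1) + -γ) = θ := by rw [hθdef]; ring
          rw [← he, Real.rpow_add hr0, Real.rpow_add hr0]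
          ring
      _ ≤ r ^ ((d:ℝ) - 1) * g r :=
          mul_le_mul_of_nonneg_left hg_lb (Real.rpow_nonneg hr0.le _)
      _ = h r := (hh_eq r hr0).symm
  -- upper bound near zero
  have hub0 : ∀ r : ℝ, 0 < r → h r ≤ C₂ ^ p * r ^ ((d:ℝ) - 1 - γ) := by
    intro r hr
    have ht : 0 < r ^ α := Real.rpow_pos_of_pos hr α
    have h1 : (C₂ + r ^ α) ^ p ≤ C₂ ^ p :=
      Real.rpow_le_rpow_of_nonpos hC2 (by linarith) hp.le
    have h2 : 0 ≤ (C₁ + r ^ α) ^ p := Real.rpow_nonneg (by linarith) _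
    have hg_ub : g r ≤ C₂ ^ p * r ^ (-γ) := by
      rw [hg_eq]
      have hrn : 0 ≤ r ^ (-γ) := Real.rpow_nonneg hr.le _
      nlinarith
    calc h r = r ^ ((d:ℝ) - 1) * g r := hh_eq r hr
      _ ≤ r ^ ((d:ℝ) - 1) * (C₂ ^ p * r ^ (-γ)) :=
          mul_le_mul_of_nonneg_left hg_ub (Real.rpow_nonneg hr.le _)
      _ = C₂ ^ p * r ^ ((d:ℝ) - 1 - γ) := by
          have he : ((d:ℝ) - 1) + -γ = (d:ℝ) - 1 - γ := by ring
          rw [← he, Real.rpow_add hr]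
          ring
  -- 1D integrability iff
  have h1D : IntegrableOn h (Ioi (0:ℝ)) volume ↔ θ < -1 := by
    constructor
    · intro hint
      have hsub : IntegrableOn h (Ioi R₀) volume :=
        hint.mono_set (Ioi_subset_Ioi hR₀pos.le)
      have hcomp : IntegrableOn (fun r => c₀ * r ^ θ) (Ioi R₀) volume := by
        refine Integrable.mono' hsub ?_ ?_
        · exact (by fun_prop : Measurable fun r : ℝ => c₀ * r ^ θ).aestronglyMeasurable
        · filter_upwards [ae_restrict_mem measurableSet_Ioi] with r hr
          have hr0 : 0 < r := lt_trans hR₀pos hr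
          rw [Real.norm_eq_abs, abs_of_nonneg
            (by positivity : (0:ℝ) ≤ c₀ * r ^ θ)]
          exact hlb r hr
      have : IntegrableOn (fun r : ℝ => r ^ θ) (Ioi R₀) volume := by
        have h2 : IntegrableOn (fun r : ℝ => c₀⁻¹ * (c₀ * r ^ θ)) (Ioi R₀) volume :=
          hcomp.const_mul c₀⁻¹
        refine IntegrableOn.congr_fun h2 (fun r hr => ?_) measurableSet_Ioi
        field_simp
      exact (integrableOn_Ioi_rpow_iff hR₀pos).1 this
    · intro hθ
      have hpart1 : IntegrableOn h (Ioc (0:ℝ) 1) volume := by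
        rw [IntegrableOn, ← Measure.restrict_congr_set Ioo_ae_eq_Ioc]
        refine Integrable.mono' (g := fun r => C₂ ^ p * r ^ ((d:ℝ) - 1 - γ)) ?_
          hhm.aestronglyMeasurable ?_
        · exact ((intervalIntegral.integrableOn_Ioo_rpow_iff one_pos).2 (by linarith)).const_mul _
        · filter_upwards [ae_restrict_mem measurableSet_Ioo] with r hr
          rw [Real.norm_eq_abs, abs_of_nonneg (hh_nonneg r hr.1)]
          exact hub0 r hr.1
      have hpart2 : IntegrableOn h (Ioi (1:ℝ)) volume := by
        refine Integrable.mono' (g := fun r => K * r ^ θ) ?_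
          hhm.aestronglyMeasurable ?_
        · exact (integrableOn_Ioi_rpow_of_lt hθ one_pos).const_mul _
        · filter_upwards [ae_restrict_mem measurableSet_Ioi] with r hr
          have hr0 : (0:ℝ) < r := lt_trans one_pos hr
          rw [Real.norm_eq_abs, abs_of_nonneg (hh_nonneg r hr0)]
          exact hub r hr0
      have := hpart1.union hpart2
      rwa [Ioc_union_Ioi_eq_Ioi zero_le_one] at this
  -- transfer to the d-dimensional integral
  rw [← hiff, ← h1D]
  set F : EuclideanSpace ℝ (Fin d) → ℝ := fun x => g ‖x‖ with hFdef
  have hFm : AEStronglyMeasurable F volume :=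
    (hgm.comp measurable_norm).aestronglyMeasurable
  have hae : ∀ᵐ x : EuclideanSpace ℝ (Fin d), x ≠ 0 := by
    have := (Set.countable_singleton (0 : EuclideanSpace ℝ (Fin d))).ae_notMem volume
    filter_upwards [this] with x hx
    simpa using hx
  have hFnonneg : 0 ≤ᵐ[volume] F := by
    filter_upwards [hae] with x hx
    exact hg_nonneg _ (norm_pos_iff.2 hx)
  have step1 : Integrable F volume ↔
      (∫⁻ x : EuclideanSpace ℝ (Fin d), ENNReal.ofReal (F x) < ⊤) := by
    constructor
    · intro hF
      rw [← hasFiniteIntegral_iff_ofReal hFnonneg]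
      exact hF.2
    · intro hF
      exact ⟨hFm, (hasFiniteIntegral_iff_ofReal hFnonneg).2 hF⟩
  have step2 : (∫⁻ x : EuclideanSpace ℝ (Fin d), ENNReal.ofReal (F x) < ⊤) ↔
      (∫⁻ r in Ioi (0:ℝ), ENNReal.ofReal (r ^ (d - 1)) * ENNReal.ofReal (g r) < ⊤) :=
    my_lintegral_norm_lt_top_iff hd0 (fun r => ENNReal.ofReal (g r)) hgm.ennreal_ofReal
  have step3 : (∫⁻ r in Ioi (0:ℝ), ENNReal.ofReal (r ^ (d - 1)) * ENNReal.ofReal (g r) < ⊤)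
      ↔ IntegrableOn h (Ioi (0:ℝ)) volume := by
    have hcongr : ∫⁻ r in Ioi (0:ℝ), ENNReal.ofReal (r ^ (d - 1)) * ENNReal.ofReal (g r)
        = ∫⁻ r in Ioi (0:ℝ), ENNReal.ofReal (h r) := by
      refine setLIntegral_congr_fun measurableSet_Ioi ?_
      intro r hr
      exact (ENNReal.ofReal_mul (pow_nonneg hr.le _)).symm
    rw [hcongr]
    constructor
    · intro hfin
      refine ⟨hhm.aestronglyMeasurable, ?_⟩
      rw [hasFiniteIntegral_iff_ofReal ?_]
      · exact hfin
      · filter_upwards [ae_restrict_mem measurableSet_Ioi] with r hr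
        exact hh_nonneg r hr
    · intro hint
      have := hint.2
      rw [hasFiniteIntegral_iff_ofReal ?_] at this
      · exact this
      · filter_upwards [ae_restrict_mem measurableSet_Ioi] with r hr
        exact hh_nonneg r hr
  exact (step1.trans step2).trans step3
end

section
/- Let m ∈ (0,1) and h ∈ (0,1/4). Suppose nonnegative reals F, G, I, J satisfy m(1+h)^{m−2}G ≤ F ≤ m(1−h)^{m−2}G, J ≤ ((1+h)^{3−2m}/((1−m)(1−h)))·I + μ·h·G, and 2(1−m)Λ·G ≤ J for some Λ, μ > 0. Then ((1−h)^{3−m}/(1+h)^{3−2m})·(2(1−m)Λ − μh)·F ≤ (m/(1−m))·I. -/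
theorem entropy_production_transfer (m h F G I J Λ μ : ℝ)
    (hm0 : 0 < m) (hm1 : m < 1) (hh0 : 0 < h) (hh : h < 1/4)
    (hF : 0 ≤ F) (hG : 0 ≤ G) (hI : 0 ≤ I) (hJ : 0 ≤ J)
    (hΛ : 0 < Λ) (hμ : 0 < μ)
    (h1 : m * (1 + h) ^ (m - 2) * G ≤ F)
    (h2 : F ≤ m * (1 - h) ^ (m - 2) * G)
    (h3 : J ≤ (1 + h) ^ (3 - 2 * m) / ((1 - m) * (1 - h)) * I + μ * h * G)
    (h4 : 2 * (1 - m) * Λ * G ≤ J)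
    (h5 : 0 ≤ 2 * (1 - m) * Λ - μ * h) :
    (1 - h) ^ (3 - m) / (1 + h) ^ (3 - 2 * m) * (2 * (1 - m) * Λ - μ * h) * F ≤
      m / (1 - m) * I := by
  have h1m : (0:ℝ) < 1 - m := by linarith
  have hp : (0:ℝ) < 1 + h := by linarith
  have hq : (0:ℝ) < 1 - h := by linarith
  have hA : 0 < (1 + h) ^ (3 - 2 * m) := Real.rpow_pos_of_pos hp _
  have hB : 0 < (1 - h) ^ (3 - m) := Real.rpow_pos_of_pos hq _
  have hkey : (1 - h) ^ (3 - m) * (1 - h) ^ (m - 2) = 1 - h := by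
    rw [← Real.rpow_add hq]
    norm_num
  have hcG : (2 * (1 - m) * Λ - μ * h) * G ≤
      (1 + h) ^ (3 - 2 * m) / ((1 - m) * (1 - h)) * I := by
    nlinarith [h4.trans h3]
  set A := (1 + h) ^ (3 - 2 * m) with hAdef
  set B := (1 - h) ^ (3 - m) with hBdef
  set c := 2 * (1 - m) * Λ - μ * h with hcdef
  have hcoef : 0 ≤ B / A * c := mul_nonneg (by positivity) h5
  calc B / A * c * F ≤ B / A * c * (m * (1 - h) ^ (m - 2) * G) := by
        exact mul_le_mul_of_nonneg_left h2 hcoef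
    _ = m * (B * (1 - h) ^ (m - 2)) / A * (c * G) := by ring
    _ = m * (1 - h) / A * (c * G) := by rw [hkey]
    _ ≤ m * (1 - h) / A * (A / ((1 - m) * (1 - h)) * I) := by
        exact mul_le_mul_of_nonneg_left hcG (by positivity)
    _ = m / (1 - m) * I := by
        field_simp
end
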